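/- For every integer n ≥ 3, every 2-coloring c of the pairs (i,j) with 1 ≤ i < j ≤ n, and every integer k with 0 ≤ k < n/2 − 1, the inequality E_{≤≤k}(c) ≥ 3·binom(k+3,3) holds. -/

import Mathlib

open Finset


/-- Number of crossings of a 2-page book drawing of `K n`, encoded as a
2-coloring `c` of the pairs `(i,j)` with `1 ≤ i < j ≤ n` (edge `ij` is drawn in the
page given by `c i j`).  Edges `(i,j)` and `(k,l)` cross iff `i < k < j < l` and
they have the same color. -/
def crossings (n : ℕ) (c : ℕ → ℕ → Bool) : ℕ :=
  ((((Finset.Icc 1 n) ×ˢ (Finset.Icc 1 n)) ×ˢ ((Finset.Icc 1 n) ×ˢ (Finset.Icc 1 n))).filter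
    (fun p => p.1.1 < p.2.1 ∧ p.2.1 < p.1.2 ∧ p.1.2 < p.2.2 ∧
      c p.1.1 p.1.2 = c p.2.1 p.2.2)).card

/-- The Hill/Guy quantity `Z n = (1/4)⌊n/2⌋⌊(n-1)/2⌋⌊(n-2)/2⌋⌊(n-3)/2⌋`. -/
def Z (n : ℕ) : ℕ := (n / 2) * ((n - 1) / 2) * ((n - 2) / 2) * ((n - 3) / 2) / 4

/-- `s(i,j)`: the number of `l < i` with `c l j = c i j` plus the number of
`j < l ≤ n` with `c i l = c i j`. -/
def sDeg (n : ℕ) (c : ℕ → ℕ → Bool) (i j : ℕ) : ℕ :=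
  ((Finset.Ico 1 i).filter (fun l => c l j = c i j)).card +
  ((Finset.Ioc j n).filter (fun l => c i l = c i j)).card

/-- The edge `(i,j)` is a `kVal n c i j`-edge: `min (s(i,j), n - 2 - s(i,j))`. -/
def kVal (n : ℕ) (c : ℕ → ℕ → Bool) (i j : ℕ) : ℕ :=
  min (sDeg n c i j) (n - 2 - sDeg n c i j)

/-- `E_k(c)`: the number of `k`-edges of `c`. -/
def Ek (n : ℕ) (c : ℕ → ℕ → Bool) (k : ℕ) : ℕ :=
  (((Finset.Icc 1 n) ×ˢ (Finset.Icc 1 n)).filter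
    (fun p => p.1 < p.2 ∧ kVal n c p.1 p.2 = k)).card

/-- `E_{≤k}(c) = Σ_{j=0}^{k} E_j(c)`. -/
def Eleq (n : ℕ) (c : ℕ → ℕ → Bool) (k : ℕ) : ℕ :=
  ∑ j ∈ Finset.range (k + 1), Ek n c j

/-- `E_{≤≤k}(c) = Σ_{j=0}^{k} E_{≤j}(c)`. -/
def Eleqleq (n : ℕ) (c : ℕ → ℕ → Bool) (k : ℕ) : ℕ :=
  ∑ j ∈ Finset.range (k + 1), Eleq n c j

/-- `E_{≤k}(c, c₁)`: the number of `(c,c₁)`-invariant `(≤ k)`-edges, where `c₁` is the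
restriction of `c` to `K_{n-1}` (deleting the rightmost vertex `n`): edges `(i,j)` with
`j ≤ n - 1` that are `j'`-edges of both `c` (in `K_n`) and `c₁` (in `K_{n-1}`) for some `j' ≤ k`. -/
def EleqInv (n : ℕ) (c : ℕ → ℕ → Bool) (k : ℕ) : ℕ :=
  (((Finset.Icc 1 (n - 1)) ×ˢ (Finset.Icc 1 (n - 1))).filter
    (fun p => p.1 < p.2 ∧ kVal n c p.1 p.2 = kVal (n - 1) c p.1 p.2 ∧
      kVal n c p.1 p.2 ≤ k)).card

/-- A 2-coloring is crossing optimal if it minimizes the number of crossings. -/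
def IsOptimal (n : ℕ) (c : ℕ → ℕ → Bool) : Prop :=
  ∀ c' : ℕ → ℕ → Bool, crossings n c ≤ crossings n c'

/-- The spine convention: the edges `(i,i+1)` and the edge `(1,n)` are blue (`true`). -/
def SpineConvention (n : ℕ) (c : ℕ → ℕ → Bool) : Prop :=
  (∀ i, 1 ≤ i → i + 1 ≤ n → c i (i + 1) = true) ∧ c 1 n = true

/-- The cyclic-shift transformation `f`. -/
def fT (n : ℕ) (c : ℕ → ℕ → Bool) : ℕ → ℕ → Bool :=
  fun i j => if j < n then c (i + 1) (j + 1) else c 1 (i + 1)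

/-- The vertical-reflection transformation `g`. -/
def gT (n : ℕ) (c : ℕ → ℕ → Bool) : ℕ → ℕ → Bool :=
  fun i j => c (n + 1 - j) (n + 1 - i)

/-- The page-exchange transformation `h` (keeping the spine edges and `(1,n)` fixed). -/
def hT (n : ℕ) (c : ℕ → ℕ → Bool) : ℕ → ℕ → Bool :=
  fun i j => if j = i + 1 ∨ (i = 1 ∧ j = n) then c i j else !(c i j)

/-- Two colorings are equivalent if `c' = h^a ∘ g^b ∘ f^m (c)` for some
`a, b ∈ {0,1}` and `0 ≤ m ≤ n - 1`. -/
def EquivCol (n : ℕ) (c c' : ℕ → ℕ → Bool) : Prop :=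
  ∃ (a b : Bool) (m : ℕ), m ≤ n - 1 ∧
    ∀ i j, 1 ≤ i → i < j → j ≤ n →
      c' i j = (if a then hT n else id) ((if b then gT n else id) ((fT n)^[m] c)) i j

/-- The position (starting from 1) of the entry `(i,l)` in the order associated to the
entry `(i,j)`: first all entries `(i,l')`, `i < l' < j`, with `c i l' ≠ c i j` in
decreasing order of `l'`, then all entries with `c i l' = c i j` in increasing order. -/
def orderPos (c : ℕ → ℕ → Bool) (i j l : ℕ) : ℕ :=
  if c i l ≠ c i j then
    ((Finset.Ioo i j).filter (fun l' => l ≤ l' ∧ c i l' ≠ c i j)).card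
  else
    ((Finset.Ioo i j).filter (fun l' => c i l' ≠ c i j)).card +
    ((Finset.Ioo i j).filter (fun l' => l' ≤ l ∧ c i l' = c i j)).card

/-- The edge `(i,j)` (with `i < j`) is crossed by some other edge of the drawing. -/
def Crossed (n : ℕ) (c : ℕ → ℕ → Bool) (i j : ℕ) : Prop :=
  ∃ k l, 1 ≤ k ∧ k < l ∧ l ≤ n ∧
    ((i < k ∧ k < j ∧ j < l ∧ c i j = c k l) ∨
     (k < i ∧ i < l ∧ l < j ∧ c i j = c k l))



lemma rank_lt_exists (t : ℕ) : ∀ (S : Finset ℕ), t < S.card → ∃ x ∈ S, (S.filter (· < x)).card = t := by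
  induction t with
  | zero =>
    intro S hS
    have hne : S.Nonempty := Finset.card_pos.mp (by omega)
    refine ⟨S.min' hne, S.min'_mem hne, ?_⟩
    rw [Finset.card_eq_zero, Finset.filter_eq_empty_iff]
    intro x hx
    exact not_lt.mpr (S.min'_le x hx)
  | succ t ih =>
    intro S hS
    have hne : S.Nonempty := Finset.card_pos.mp (by omega)
    set m := S.min' hne with hm
    have hmS : m ∈ S := S.min'_mem hne
    have hcard : (S.erase m).card = S.card - 1 := Finset.card_erase_of_mem hmS
    obtain ⟨x, hx, hrk⟩ := ih (S.erase m) (by omega)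
    have hxS : x ∈ S := Finset.mem_of_mem_erase hx
    have hmx : m < x := lt_of_le_of_ne (S.min'_le x hxS) (Ne.symm (Finset.ne_of_mem_erase hx))
    refine ⟨x, hxS, ?_⟩
    have : S.filter (· < x) = insert m ((S.erase m).filter (· < x)) := by
      ext l
      simp only [Finset.mem_filter, Finset.mem_insert, Finset.mem_erase]
      constructor
      · rintro ⟨hlS, hlx⟩
        by_cases h : l = m
        · exact Or.inl h
        · exact Or.inr ⟨⟨h, hlS⟩, hlx⟩
      · rintro (rfl | ⟨⟨-, hlS⟩, hlx⟩)
        · exact ⟨hmS, hmx⟩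
        · exact ⟨hlS, hlx⟩
    rw [this, Finset.card_insert_of_notMem (by simp), hrk]
  
lemma rank_gt_exists (t : ℕ) : ∀ (S : Finset ℕ), t < S.card → ∃ x ∈ S, (S.filter (x < ·)).card = t := by
  induction t with
  | zero =>
    intro S hS
    have hne : S.Nonempty := Finset.card_pos.mp (by omega)
    refine ⟨S.max' hne, S.max'_mem hne, ?_⟩
    rw [Finset.card_eq_zero, Finset.filter_eq_empty_iff]
    intro x hx
    exact not_lt.mpr (S.le_max' x hx)
  | succ t ih =>
    intro S hS
    have hne : S.Nonempty := Finset.card_pos.mp (by omega)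
    set m := S.max' hne with hm
    have hmS : m ∈ S := S.max'_mem hne
    have hcard : (S.erase m).card = S.card - 1 := Finset.card_erase_of_mem hmS
    obtain ⟨x, hx, hrk⟩ := ih (S.erase m) (by omega)
    have hxS : x ∈ S := Finset.mem_of_mem_erase hx
    have hmx : x < m := lt_of_le_of_ne (S.le_max' x hxS) (Finset.ne_of_mem_erase hx)
    refine ⟨x, hxS, ?_⟩
    have : S.filter (x < ·) = insert m ((S.erase m).filter (x < ·)) := by
      ext l
      simp only [Finset.mem_filter, Finset.mem_insert, Finset.mem_erase]
      constructor
      · rintro ⟨hlS, hlx⟩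
        by_cases h : l = m
        · exact Or.inl h
        · exact Or.inr ⟨⟨h, hlS⟩, hlx⟩
      · rintro (rfl | ⟨⟨-, hlS⟩, hlx⟩)
        · exact ⟨hmS, hmx⟩
        · exact ⟨hlS, hlx⟩
    rw [this, Finset.card_insert_of_notMem (by simp), hrk]

lemma card_rank_le (S : Finset ℕ) (j : ℕ) :
    min S.card (j+1) ≤ (S.filter (fun x => (S.filter (· < x)).card ≤ j)).card := by
  have hsub : Finset.range (min S.card (j+1)) ⊆
      (S.filter (fun x => (S.filter (· < x)).card ≤ j)).image (fun x => (S.filter (· < x)).card) := by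
    intro t ht
    rw [Finset.mem_range] at ht
    obtain ⟨x, hxS, hrk⟩ := rank_lt_exists t S (by omega)
    exact Finset.mem_image.mpr ⟨x, Finset.mem_filter.mpr ⟨hxS, by omega⟩, hrk⟩
  calc min S.card (j+1) = (Finset.range (min S.card (j+1))).card := by rw [Finset.card_range]
    _ ≤ _ := Finset.card_le_card hsub
    _ ≤ _ := Finset.card_image_le

lemma card_rank_ge (S : Finset ℕ) (r : ℕ) :
    S.card - r ≤ (S.filter (fun x => r ≤ (S.filter (· < x)).card)).card := by
  have hsub : Finset.range (S.card - r) ⊆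
      (S.filter (fun x => r ≤ (S.filter (· < x)).card)).image (fun x => (S.filter (· < x)).card - r) := by
    intro t ht
    rw [Finset.mem_range] at ht
    obtain ⟨x, hxS, hrk⟩ := rank_lt_exists (r + t) S (by omega)
    exact Finset.mem_image.mpr ⟨x, Finset.mem_filter.mpr ⟨hxS, by omega⟩, by omega⟩
  calc S.card - r = (Finset.range (S.card - r)).card := by rw [Finset.card_range]
    _ ≤ _ := Finset.card_le_card hsub
    _ ≤ _ := Finset.card_image_le

lemma card_trank_le (S : Finset ℕ) (j : ℕ) :
    min S.card (j+1) ≤ (S.filter (fun x => (S.filter (x < ·)).card ≤ j)).card := by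
  have hsub : Finset.range (min S.card (j+1)) ⊆
      (S.filter (fun x => (S.filter (x < ·)).card ≤ j)).image (fun x => (S.filter (x < ·)).card) := by
    intro t ht
    rw [Finset.mem_range] at ht
    obtain ⟨x, hxS, hrk⟩ := rank_gt_exists t S (by omega)
    exact Finset.mem_image.mpr ⟨x, Finset.mem_filter.mpr ⟨hxS, by omega⟩, hrk⟩
  calc min S.card (j+1) = (Finset.range (min S.card (j+1))).card := by rw [Finset.card_range]
    _ ≤ _ := Finset.card_le_card hsub
    _ ≤ _ := Finset.card_image_le

lemma card_trank_ge (S : Finset ℕ) (r : ℕ) :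
    S.card - r ≤ (S.filter (fun x => r ≤ (S.filter (x < ·)).card)).card := by
  have hsub : Finset.range (S.card - r) ⊆
      (S.filter (fun x => r ≤ (S.filter (x < ·)).card)).image (fun x => (S.filter (x < ·)).card - r) := by
    intro t ht
    rw [Finset.mem_range] at ht
    obtain ⟨x, hxS, hrk⟩ := rank_gt_exists (r + t) S (by omega)
    exact Finset.mem_image.mpr ⟨x, Finset.mem_filter.mpr ⟨hxS, by omega⟩, by omega⟩
  calc S.card - r = (Finset.range (S.card - r)).card := by rw [Finset.card_range]
    _ ≤ _ := Finset.card_le_card hsub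
    _ ≤ _ := Finset.card_image_le

lemma sum_if_le (v m : ℕ) : (∑ j ∈ Finset.range m, if v ≤ j then 1 else 0) = m - v := by
  rw [Finset.sum_boole]
  have : (Finset.range m).filter (fun j => v ≤ j) = Finset.Ico v m := by
    ext x; simp only [Finset.mem_filter, Finset.mem_range, Finset.mem_Ico]; omega
  rw [this]
  simp [Nat.card_Ico]

lemma sDeg_succ (m : ℕ) (c : ℕ → ℕ → Bool) (i j : ℕ) (hj : j ≤ m) :
    sDeg (m+1) c i j = sDeg m c i j + (if c i (m+1) = c i j then 1 else 0) := by
  unfold sDeg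
  have h1 : Finset.Ioc j (m+1) = insert (m+1) (Finset.Ioc j m) := by
    ext l; simp [Finset.mem_Ioc]; omega
  rw [h1, Finset.filter_insert]
  split_ifs with h
  · rw [Finset.card_insert_of_notMem (by simp)]; omega
  · omega

lemma kVal_succ_le (m : ℕ) (c : ℕ → ℕ → Bool) (i j : ℕ) (hj : j ≤ m) :
    kVal (m+1) c i j ≤ kVal m c i j + 1 := by
  unfold kVal
  rw [sDeg_succ m c i j hj]
  split_ifs <;> omega

lemma kVal_inv_ne (m : ℕ) (c : ℕ → ℕ → Bool) (i j k : ℕ) (hj : j ≤ m)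
    (hc : ¬ (c i (m+1) = c i j)) (hs : sDeg (m+1) c i j ≤ k) (hk : 2*k+2 < m+1) :
    kVal (m+1) c i j = kVal m c i j ∧ kVal (m+1) c i j ≤ k := by
  have h := sDeg_succ m c i j hj
  rw [if_neg hc] at h
  unfold kVal
  omega

lemma kVal_inv_eq (m : ℕ) (c : ℕ → ℕ → Bool) (i j k : ℕ) (hj : j ≤ m)
    (hc : c i (m+1) = c i j) (hs : (m+1) - 2 - k ≤ sDeg (m+1) c i j) (hk : 2*k+2 < m+1) :
    kVal (m+1) c i j = kVal m c i j ∧ kVal (m+1) c i j ≤ k := by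
  have h := sDeg_succ m c i j hj
  rw [if_pos hc] at h
  unfold kVal
  omega

lemma Eleqleq_eq_sum (n k : ℕ) (c : ℕ → ℕ → Bool) :
    Eleqleq n c k = ∑ p ∈ (Finset.Icc 1 n) ×ˢ (Finset.Icc 1 n),
      if p.1 < p.2 then (k+1) - kVal n c p.1 p.2 else 0 := by
  unfold Eleqleq Eleq Ek
  simp only [Finset.card_filter]
  rw [Finset.sum_congr rfl (fun j _ => Finset.sum_comm (s := Finset.range (j+1))
    (t := (Finset.Icc 1 n) ×ˢ (Finset.Icc 1 n))
    (f := fun j' p => if p.1 < p.2 ∧ kVal n c p.1 p.2 = j' then 1 else 0))]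
  rw [Finset.sum_comm]
  refine Finset.sum_congr rfl ?_
  rintro ⟨x, y⟩ -
  by_cases h : x < y
  · simp only [h, true_and, if_true]
    have h2 : ∀ j : ℕ, (∑ j' ∈ Finset.range (j+1), if kVal n c x y = j' then 1 else 0)
        = if kVal n c x y ≤ j then 1 else 0 := by
      intro j
      rw [Finset.sum_ite_eq (Finset.range (j+1)) (kVal n c x y) (fun _ => 1)]
      simp [Nat.lt_succ_iff]
    calc (∑ j ∈ Finset.range (k+1), ∑ j' ∈ Finset.range (j+1),
            if kVal n c x y = j' then 1 else 0)
        = ∑ j ∈ Finset.range (k+1), if kVal n c x y ≤ j then 1 else 0 :=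
          Finset.sum_congr rfl (fun j _ => h2 j)
      _ = (k+1) - kVal n c x y := sum_if_le _ _
  · simp [h]

lemma sum_split (m k : ℕ) (c : ℕ → ℕ → Bool) :
    Eleqleq (m+1) c k =
      (∑ p ∈ (Finset.Icc 1 m) ×ˢ (Finset.Icc 1 m),
        if p.1 < p.2 then (k+1) - kVal (m+1) c p.1 p.2 else 0)
      + ∑ i ∈ Finset.Icc 1 m, ((k+1) - kVal (m+1) c i (m+1)) := by
  rw [Eleqleq_eq_sum, Finset.sum_product]
  conv_rhs => rw [Finset.sum_product]
  rw [Finset.sum_Icc_succ_top (by omega : (1:ℕ) ≤ m+1)]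
  have hlast : (∑ y ∈ Finset.Icc 1 (m+1), if (m+1) < y then (k+1) - kVal (m+1) c (m+1) y else 0) = 0 := by
    apply Finset.sum_eq_zero; intro y hy
    rw [Finset.mem_Icc] at hy
    rw [if_neg (by omega)]
  rw [hlast, add_zero]
  have hinner : ∀ x ∈ Finset.Icc 1 m,
      (∑ y ∈ Finset.Icc 1 (m+1), if x < y then (k+1) - kVal (m+1) c x y else 0)
      = (∑ y ∈ Finset.Icc 1 m, if x < y then (k+1) - kVal (m+1) c x y else 0)
        + ((k+1) - kVal (m+1) c x (m+1)) := by
    intro x hx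
    rw [Finset.mem_Icc] at hx
    rw [Finset.sum_Icc_succ_top (by omega : (1:ℕ) ≤ m+1), if_pos (by omega)]
  rw [Finset.sum_congr rfl hinner, Finset.sum_add_distrib]

lemma step_ge (m k' : ℕ) (c : ℕ → ℕ → Bool) :
    Eleqleq m c k' + EleqInv (m+1) c (k'+1) ≤
      ∑ p ∈ (Finset.Icc 1 m) ×ˢ (Finset.Icc 1 m),
        if p.1 < p.2 then (k'+1+1) - kVal (m+1) c p.1 p.2 else 0 := by
  rw [Eleqleq_eq_sum]
  unfold EleqInv
  simp only [Nat.add_sub_cancel, Finset.card_filter]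
  rw [← Finset.sum_add_distrib]
  apply Finset.sum_le_sum
  rintro ⟨x, y⟩ hxy
  dsimp only
  simp only [Finset.mem_product, Finset.mem_Icc] at hxy
  by_cases h : x < y
  · simp only [h, true_and, if_true]
    have hle := kVal_succ_le m c x y hxy.2.2
    by_cases hinv : kVal (m+1) c x y = kVal m c x y ∧ kVal (m+1) c x y ≤ k'+1
    · rw [if_pos hinv]; omega
    · rw [if_neg hinv]; omega
  · simp [h]

lemma base_ge (m : ℕ) (c : ℕ → ℕ → Bool) :
    EleqInv (m+1) c 0 ≤
      ∑ p ∈ (Finset.Icc 1 m) ×ˢ (Finset.Icc 1 m),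
        if p.1 < p.2 then (0+1) - kVal (m+1) c p.1 p.2 else 0 := by
  unfold EleqInv
  simp only [Nat.add_sub_cancel, Finset.card_filter]
  apply Finset.sum_le_sum
  rintro ⟨x, y⟩ hxy
  dsimp only
  by_cases hinv : x < y ∧ kVal (m+1) c x y = kVal m c x y ∧ kVal (m+1) c x y ≤ 0
  · obtain ⟨h1, h2, h3⟩ := hinv
    rw [if_pos ⟨h1, h2, h3⟩, if_pos h1]; omega
  · rw [if_neg hinv]; omega

lemma two_choose2 : ∀ K : ℕ, 2 * (K+1).choose 2 = K * (K+1) := by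
  intro K
  induction K with
  | zero => simp
  | succ K ih =>
    rw [show K+1+1 = (K+1)+1 from rfl, Nat.choose_succ_succ (K+1) 1, Nat.choose_one_right,
      mul_add, ih]
    ring

lemma sum_desc : ∀ K : ℕ, (∑ i ∈ Finset.Icc 1 K, (K+1-i)) = (K+1).choose 2 := by
  intro K
  induction K with
  | zero => simp
  | succ K ih =>
    rw [Finset.sum_Icc_succ_top (by omega : (1:ℕ) ≤ K+1)]
    have h1 : ∀ i ∈ Finset.Icc 1 K, (K+1+1-i) = (K+1-i) + 1 := by
      intro i hi; rw [Finset.mem_Icc] at hi; omega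
    rw [Finset.sum_congr rfl h1, Finset.sum_add_distrib, ih]
    simp only [Finset.sum_const, Nat.card_Icc, smul_eq_mul, mul_one]
    rw [Nat.choose_succ_succ (K+1) 1, Nat.choose_one_right]
    have hs : (K+1).choose (Nat.succ 1) = (K+1).choose 2 := rfl
    rw [hs]
    omega

lemma sum_2j : ∀ K : ℕ, (∑ j ∈ Finset.range K, (2*j+2)) = K * (K+1) := by
  intro K
  induction K with
  | zero => simp
  | succ K ih => rw [Finset.sum_range_succ, ih]; ring

lemma boolEqOfNe : ∀ x y z : Bool, ¬ x = z → ¬ y = z → x = y := by decide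

lemma sDeg_last (m : ℕ) (c : ℕ → ℕ → Bool) (i : ℕ) :
    sDeg (m+1) c i (m+1) = ((Finset.Ico 1 i).filter (fun l => c l (m+1) = c i (m+1))).card := by
  unfold sDeg
  simp

lemma rank_eq (m : ℕ) (c : ℕ → ℕ → Bool) (b : Bool) (i : ℕ) (hi : i ∈ Finset.Icc 1 m)
    (hci : c i (m+1) = b) :
    sDeg (m+1) c i (m+1) =
      (((Finset.Icc 1 m).filter (fun l => c l (m+1) = b)).filter (· < i)).card := by
  rw [sDeg_last]
  congr 1
  rw [Finset.mem_Icc] at hi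
  ext l
  simp only [Finset.mem_filter, Finset.mem_Ico, Finset.mem_Icc, hci]
  constructor
  · rintro ⟨⟨h1, h2⟩, h3⟩; exact ⟨⟨⟨h1, by omega⟩, h3⟩, h2⟩
  · rintro ⟨⟨⟨h1, h2⟩, h3⟩, h4⟩; exact ⟨⟨h1, h4⟩, h3⟩

lemma vn_per_j (m : ℕ) (c : ℕ → ℕ → Bool) (j : ℕ) (h : 2*j+2 < m+1) :
    2*j+2 ≤ ((Finset.Icc 1 m).filter (fun i => kVal (m+1) c i (m+1) ≤ j)).card := by
  classical
  set G := (Finset.Icc 1 m).filter (fun i => kVal (m+1) c i (m+1) ≤ j) with hG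
  have hcontrib : ∀ b : Bool,
      min ((Finset.Icc 1 m).filter (fun l => c l (m+1) = b)).card (j+1)
      + (((Finset.Icc 1 m).filter (fun l => c l (m+1) = b)).card - ((m+1)-2-j))
      ≤ (G.filter (fun i => c i (m+1) = b)).card := by
    intro b
    set S := (Finset.Icc 1 m).filter (fun l => c l (m+1) = b) with hS
    have h1 : S.filter (fun x => (S.filter (· < x)).card ≤ j) ⊆ G.filter (fun i => c i (m+1) = b) := by
      intro x hx
      rw [Finset.mem_filter] at hx
      obtain ⟨hxS, hrk⟩ := hx
      have hxS2 := hxS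
      rw [hS, Finset.mem_filter] at hxS2
      obtain ⟨hxI, hxb⟩ := hxS2
      have hsd := rank_eq m c b x hxI hxb
      rw [← hS] at hsd
      rw [Finset.mem_filter, hG, Finset.mem_filter]
      refine ⟨⟨hxI, ?_⟩, hxb⟩
      unfold kVal
      rw [hsd]
      omega
    have h2 : S.filter (fun x => (m+1)-2-j ≤ (S.filter (· < x)).card) ⊆ G.filter (fun i => c i (m+1) = b) := by
      intro x hx
      rw [Finset.mem_filter] at hx
      obtain ⟨hxS, hrk⟩ := hx
      have hxS2 := hxS
      rw [hS, Finset.mem_filter] at hxS2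
      obtain ⟨hxI, hxb⟩ := hxS2
      have hsd := rank_eq m c b x hxI hxb
      rw [← hS] at hsd
      rw [Finset.mem_filter, hG, Finset.mem_filter]
      refine ⟨⟨hxI, ?_⟩, hxb⟩
      unfold kVal
      rw [hsd]
      omega
    have hdisj : Disjoint (S.filter (fun x => (S.filter (· < x)).card ≤ j))
        (S.filter (fun x => (m+1)-2-j ≤ (S.filter (· < x)).card)) := by
      rw [Finset.disjoint_left]
      intro x hx1 hx2
      rw [Finset.mem_filter] at hx1 hx2
      omega
    have hcA := card_rank_le S j
    have hcB := card_rank_ge S ((m+1)-2-j)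
    have hunion := Finset.card_union_of_disjoint hdisj
    have hsub := Finset.card_le_card (Finset.union_subset h1 h2)
    omega
  have ht := hcontrib true
  have hf := hcontrib false
  have hTF : ((Finset.Icc 1 m).filter (fun l => c l (m+1) = true)).card
      + ((Finset.Icc 1 m).filter (fun l => c l (m+1) = false)).card = m := by
    have heq : (Finset.Icc 1 m).filter (fun l => c l (m+1) = false)
        = (Finset.Icc 1 m).filter (fun l => ¬ (c l (m+1) = true)) := by
      apply Finset.filter_congr
      intro l _
      simp
    rw [heq, Finset.card_filter_add_card_filter_not, Nat.card_Icc]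
    omega
  have hGdisj : Disjoint (G.filter (fun i => c i (m+1) = true))
      (G.filter (fun i => c i (m+1) = false)) := by
    rw [Finset.disjoint_left]
    intro x hx1 hx2
    rw [Finset.mem_filter] at hx1 hx2
    rw [hx1.2] at hx2
    exact absurd hx2.2 (by simp)
  have hGunion := Finset.card_union_of_disjoint hGdisj
  have hGsub := Finset.card_le_card
    (Finset.union_subset (Finset.filter_subset (fun i => c i (m+1) = true) G)
      (Finset.filter_subset (fun i => c i (m+1) = false) G))
  omega

lemma inv_per_i (m : ℕ) (c : ℕ → ℕ → Bool) (k i : ℕ) (hk : 2*k+2 < m+1)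
    (hi1 : 1 ≤ i) (hik : i ≤ k+1) :
    k+2-i ≤ ((Finset.Icc 1 m).filter
      (fun j => i < j ∧ kVal (m+1) c i j = kVal m c i j ∧ kVal (m+1) c i j ≤ k)).card := by
  classical
  set G := (Finset.Icc 1 m).filter
    (fun j => i < j ∧ kVal (m+1) c i j = kVal m c i j ∧ kVal (m+1) c i j ≤ k) with hG
  set A := (Finset.Ioc i m).filter (fun l => ¬ (c i l = c i (m+1))) with hA
  set B := (Finset.Ioc i m).filter (fun l => c i l = c i (m+1)) with hB
  set Bf := insert (m+1) B with hBf
  have hAsub : A.filter (fun x => (A.filter (x < ·)).card ≤ k+1-i) ⊆ G := by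
    intro q hq
    rw [Finset.mem_filter] at hq
    obtain ⟨hqA, hrk⟩ := hq
    have hqA' := hqA
    rw [hA, Finset.mem_filter, Finset.mem_Ioc] at hqA'
    obtain ⟨⟨hiq, hqm⟩, hne⟩ := hqA'
    have hR : (Finset.Ioc q (m+1)).filter (fun l => c i l = c i q) = A.filter (fun l => q < l) := by
      rw [hA]
      ext l
      simp only [Finset.mem_filter, Finset.mem_Ioc]
      constructor
      · rintro ⟨⟨hql, hlm⟩, hcl⟩
        have hlne : ¬ (c i l = c i (m+1)) := by
          intro hcontra
          rw [hcl] at hcontra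
          exact hne hcontra
        have hlm1 : l ≠ m+1 := by
          intro e
          rw [e] at hlne
          exact hlne rfl
        exact ⟨⟨⟨by omega, by omega⟩, hlne⟩, hql⟩
      · rintro ⟨⟨⟨hil, hlm⟩, hlne⟩, hql⟩
        exact ⟨⟨hql, by omega⟩, boolEqOfNe _ _ _ hlne hne⟩
    have hL : ((Finset.Ico 1 i).filter (fun l => c l q = c i q)).card ≤ i - 1 := by
      calc ((Finset.Ico 1 i).filter (fun l => c l q = c i q)).card
          ≤ (Finset.Ico 1 i).card := Finset.card_filter_le _ _
        _ = i - 1 := by rw [Nat.card_Ico]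
    have hs : sDeg (m+1) c i q ≤ k := by
      unfold sDeg
      rw [hR]
      omega
    obtain ⟨he, hle⟩ := kVal_inv_ne m c i q k hqm (fun hh => hne hh.symm) hs hk
    rw [hG, Finset.mem_filter, Finset.mem_Icc]
    exact ⟨⟨by omega, hqm⟩, hiq, he, hle⟩
  have hBsub : Bf.filter (fun x => (m+1)-2-k ≤ (Bf.filter (x < ·)).card) ⊆ G := by
    intro q hq
    rw [Finset.mem_filter] at hq
    obtain ⟨hqBf, hrk⟩ := hq
    have hqB : q ∈ B := by
      have hmem := hqBf
      rw [hBf, Finset.mem_insert] at hmem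
      rcases hmem with hq1 | hmem'
      · exfalso
        have hemp : Bf.filter (fun l => q < l) = ∅ := by
          rw [Finset.filter_eq_empty_iff]
          intro l hl
          rw [hBf, Finset.mem_insert] at hl
          rcases hl with rfl | hlB
          · omega
          · rw [hB, Finset.mem_filter, Finset.mem_Ioc] at hlB
            omega
        rw [hemp, Finset.card_empty] at hrk
        omega
      · exact hmem'
    have hqB' := hqB
    rw [hB, Finset.mem_filter, Finset.mem_Ioc] at hqB'
    obtain ⟨⟨hiq, hqm⟩, hceq⟩ := hqB'
    have hR : (Finset.Ioc q (m+1)).filter (fun l => c i l = c i q) = Bf.filter (fun l => q < l) := by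
      rw [hBf, hB]
      ext l
      simp only [Finset.mem_insert, Finset.mem_filter, Finset.mem_Ioc]
      constructor
      · rintro ⟨⟨hql, hlm⟩, hcl⟩
        by_cases he : l = m+1
        · exact ⟨Or.inl he, hql⟩
        · refine ⟨Or.inr ⟨⟨by omega, by omega⟩, by rw [hcl, hceq]⟩, hql⟩
      · rintro ⟨hl | ⟨⟨hil, hlm⟩, hcl⟩, hql⟩
        · subst hl
          exact ⟨⟨hql, le_refl _⟩, hceq.symm⟩
        · refine ⟨⟨hql, by omega⟩, by rw [hcl, ← hceq]⟩
    have hs : (m+1)-2-k ≤ sDeg (m+1) c i q := by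
      unfold sDeg
      rw [hR]
      omega
    obtain ⟨he, hle⟩ := kVal_inv_eq m c i q k hqm hceq.symm hs hk
    rw [hG, Finset.mem_filter, Finset.mem_Icc]
    exact ⟨⟨by omega, hqm⟩, hiq, he, hle⟩
  have hdisj : Disjoint (A.filter (fun x => (A.filter (x < ·)).card ≤ k+1-i))
      (Bf.filter (fun x => (m+1)-2-k ≤ (Bf.filter (x < ·)).card)) := by
    rw [Finset.disjoint_left]
    intro q hq1 hq2
    have h1 : q ∈ A := (Finset.mem_filter.mp hq1).1
    have h2 : q ∈ Bf := (Finset.mem_filter.mp hq2).1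
    rw [hA, Finset.mem_filter, Finset.mem_Ioc] at h1
    rw [hBf, Finset.mem_insert] at h2
    rcases h2 with rfl | h2'
    · omega
    · rw [hB, Finset.mem_filter] at h2'
      exact h1.2 h2'.2
  have hcA := card_trank_le A (k+1-i)
  have hcB := card_trank_ge Bf ((m+1)-2-k)
  have hBfcard : Bf.card = B.card + 1 := by
    rw [hBf, Finset.card_insert_of_notMem]
    intro hmem
    rw [hB, Finset.mem_filter, Finset.mem_Ioc] at hmem
    omega
  have hABcard : B.card + A.card = m - i := by
    rw [hA, hB, Finset.card_filter_add_card_filter_not, Nat.card_Ioc]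
  have hunion := Finset.card_union_of_disjoint hdisj
  have hsub := Finset.card_le_card (Finset.union_subset hAsub hBsub)
  omega

lemma vn_bound (m : ℕ) (c : ℕ → ℕ → Bool) (k : ℕ) (hk : 2*k+2 < m+1) :
    2 * ((k+2).choose 2) ≤ ∑ i ∈ Finset.Icc 1 m, ((k+1) - kVal (m+1) c i (m+1)) := by
  have h0 : 2 * ((k+2).choose 2) = (k+1)*(k+2) := by
    have h := two_choose2 (k+1)
    rw [show k+1+1 = k+2 from by omega] at h
    exact h
  rw [h0]
  calc (k+1)*(k+2) = ∑ j ∈ Finset.range (k+1), (2*j+2) := (sum_2j (k+1)).symm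
    _ ≤ ∑ j ∈ Finset.range (k+1),
        ((Finset.Icc 1 m).filter (fun i => kVal (m+1) c i (m+1) ≤ j)).card := by
        apply Finset.sum_le_sum
        intro j hj
        rw [Finset.mem_range] at hj
        exact vn_per_j m c j (by omega)
    _ = ∑ j ∈ Finset.range (k+1), ∑ i ∈ Finset.Icc 1 m,
        (if kVal (m+1) c i (m+1) ≤ j then 1 else 0) := by
        refine Finset.sum_congr rfl ?_
        intro j _
        rw [Finset.card_filter]
    _ = ∑ i ∈ Finset.Icc 1 m, ∑ j ∈ Finset.range (k+1),
        (if kVal (m+1) c i (m+1) ≤ j then 1 else 0) := Finset.sum_comm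
    _ = ∑ i ∈ Finset.Icc 1 m, ((k+1) - kVal (m+1) c i (m+1)) := by
        refine Finset.sum_congr rfl ?_
        intro i _
        rw [sum_if_le]

lemma inv_bound (m : ℕ) (c : ℕ → ℕ → Bool) (k : ℕ) (hk : 2*k+2 < m+1) :
    (k+2).choose 2 ≤ EleqInv (m+1) c k := by
  classical
  unfold EleqInv
  simp only [Nat.add_sub_cancel]
  have hdisjU : ∀ x ∈ Finset.Icc 1 (k+1), ∀ y ∈ Finset.Icc 1 (k+1), x ≠ y →
      Disjoint ((((Finset.Icc 1 m).filter
          (fun j => x < j ∧ kVal (m+1) c x j = kVal m c x j ∧ kVal (m+1) c x j ≤ k)).image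
          (fun j => (x, j)))
        : Finset (ℕ × ℕ))
        (((Finset.Icc 1 m).filter
          (fun j => y < j ∧ kVal (m+1) c y j = kVal m c y j ∧ kVal (m+1) c y j ≤ k)).image
          (fun j => (y, j))) := by
    intro x _ y _ hxy
    rw [Finset.disjoint_left]
    intro p hp1 hp2
    rw [Finset.mem_image] at hp1 hp2
    obtain ⟨j1, _, rfl⟩ := hp1
    obtain ⟨j2, _, he⟩ := hp2
    exact hxy (congrArg Prod.fst he).symm
  have hsd : ∑ i ∈ Finset.Icc 1 (k+1), (k+2-i) = (k+2).choose 2 := by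
    have h := sum_desc (k+1)
    rw [show k+1+1 = k+2 from by omega] at h
    exact h
  calc (k+2).choose 2 = ∑ i ∈ Finset.Icc 1 (k+1), (k+2-i) := hsd.symm
    _ ≤ ∑ i ∈ Finset.Icc 1 (k+1),
        ((((Finset.Icc 1 m).filter
          (fun j => i < j ∧ kVal (m+1) c i j = kVal m c i j ∧ kVal (m+1) c i j ≤ k)).image
          (fun j => (i, j))).card) := by
        apply Finset.sum_le_sum
        intro i hi
        rw [Finset.mem_Icc] at hi
        rw [Finset.card_image_of_injective _ (fun a b h => by simpa using h)]
        exact inv_per_i m c k i hk hi.1 hi.2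
    _ = ((Finset.Icc 1 (k+1)).biUnion (fun i => ((Finset.Icc 1 m).filter
          (fun j => i < j ∧ kVal (m+1) c i j = kVal m c i j ∧ kVal (m+1) c i j ≤ k)).image
          (fun j => (i, j)))).card := (Finset.card_biUnion hdisjU).symm
    _ ≤ _ := by
        apply Finset.card_le_card
        intro p hp
        rw [Finset.mem_biUnion] at hp
        obtain ⟨i, hi, hp2⟩ := hp
        rw [Finset.mem_image] at hp2
        obtain ⟨j, hj, rfl⟩ := hp2
        rw [Finset.mem_Icc] at hi
        rw [Finset.mem_filter, Finset.mem_Icc] at hj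
        rw [Finset.mem_filter, Finset.mem_product, Finset.mem_Icc, Finset.mem_Icc]
        exact ⟨⟨⟨hi.1, by omega⟩, hj.1⟩, hj.2⟩

lemma pascal3 (K : ℕ) : (K+4).choose 3 = (K+3).choose 3 + (K+3).choose 2 := by
  rw [show K+4 = (K+3)+1 from rfl, Nat.choose_succ_succ (K+3) 2]
  have e : (K+3).choose (Nat.succ 2) = (K+3).choose 3 := rfl
  rw [e]
  omega

/-- For `n ≥ 3` and `0 ≤ k < n/2 − 1`, `E_{≤≤k}(c) ≥ 3·C(k+3,3)`. -/
theorem Eleqleq_lower_bound (n k : ℕ) (hn : 3 ≤ n) (hk : 2 * k + 2 < n)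
    (c : ℕ → ℕ → Bool) :
    3 * (k + 3).choose 3 ≤ Eleqleq n c k := by
  clear hn
  induction k generalizing n c with
  | zero =>
    obtain ⟨m, rfl⟩ : ∃ m, n = m + 1 := ⟨n - 1, by omega⟩
    have h1 := sum_split m 0 c
    have h2 := base_ge m c
    have h3 := inv_bound m c 0 (by omega)
    have h4 := vn_bound m c 0 (by omega)
    have h5 : (0+3).choose 3 = 1 := rfl
    have h6 : (0+2).choose 2 = 1 := rfl
    omega
  | succ k' ih =>
    obtain ⟨m, rfl⟩ : ∃ m, n = m + 1 := ⟨n - 1, by omega⟩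
    have hIH := ih m (by omega) c
    have h1 := sum_split m (k'+1) c
    have h2 := step_ge m k' c
    have h3 := inv_bound m c (k'+1) (by omega)
    have h4 := vn_bound m c (k'+1) (by omega)
    have e1 : (k'+1+3).choose 3 = (k'+4).choose 3 := by rw [show k'+1+3 = k'+4 from by omega]
    have e2 : (k'+1+2).choose 2 = (k'+3).choose 2 := by rw [show k'+1+2 = k'+3 from by omega]
    have h5 := pascal3 k'
    omega
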